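/- Let φ be a topological expansive flow on a metric space X that is dynamically isolated at infinity. Then the growth rate of periodic orbits satisfies limsup_{t→∞} (1/t) log v(t) ≤ e*(φ), where v(t) is the number of periodic orbits of period at most t. -/

import Mathlib

open Set Metric

def IsFlow {X : Type*} [TopologicalSpace X] (φ : ℝ → X → X) : Prop :=
  (∀ x, φ 0 x = x) ∧ (∀ s t x, φ (s + t) x = φ s (φ t x)) ∧
    Continuous (fun p : ℝ × X => φ p.1 p.2)

def TopExpansive {X : Type*} [MetricSpace X] (φ : ℝ → X → X) : Prop :=
  ∀ ε : ℝ, 0 < ε → ∃ δ : X → ℝ, Continuous δ ∧ (∀ x, 0 < δ x) ∧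
    ∀ x y : X, ∀ α : ℝ → ℝ, Continuous α → α 0 = 0 →
      (∀ t : ℝ, dist (φ t x) (φ (α t) y) < δ (φ t x)) →
      ∃ s ∈ Set.Icc (-ε) ε, φ s x = y

def ExpansiveFlow {X : Type*} [MetricSpace X] (φ : ℝ → X → X) : Prop :=
  ∀ ε : ℝ, 0 < ε → ∃ δ : ℝ, 0 < δ ∧
    ∀ x y : X, ∀ α : ℝ → ℝ, Continuous α → α 0 = 0 →
      (∀ t : ℝ, dist (φ t x) (φ (α t) y) < δ) →
      ∃ s ∈ Set.Icc (-ε) ε, φ s x = y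

noncomputable def sepMax {X : Type*} [MetricSpace X] (φ : ℝ → X → X)
    (t : ℝ) (δ : X → ℝ) (K : Set X) : ℕ :=
  sSup {n : ℕ | ∃ E : Finset X, ↑E ⊆ K ∧ E.card = n ∧
    ∀ x ∈ E, ∀ y ∈ E, x ≠ y → ∃ s ∈ Set.Icc (0 : ℝ) t, δ (φ s x) ≤ dist (φ s x) (φ s y)}

noncomputable def betaInf {X : Type*} [MetricSpace X] (φ : ℝ → X → X)
    (t : ℝ) (δ : X → ℝ) (K : Set X) : ℝ :=
  sInf ((fun p : X × ℝ => δ (φ p.2 p.1)) '' (K ×ˢ Set.Icc (0 : ℝ) t))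

noncomputable def eStar {X : Type*} [MetricSpace X] (φ : ℝ → X → X) : EReal :=
  ⨆ (K : Set X) (_ : IsCompact K) (δ : X → ℝ) (_ : Continuous δ) (_ : ∀ x, 0 < δ x),
    Filter.limsup
      (fun t : ℝ =>
        (((1 / t) * Real.log ((sepMax φ t δ K : ℝ) / betaInf φ t δ K)) : EReal))
      Filter.atTop

noncomputable def periodicOrbitCount {X : Type*} (φ : ℝ → X → X) (t : ℝ) : ℕ :=
  Nat.card {O : Set X // ∃ (x : X) (T : ℝ), 0 < T ∧ T ≤ t ∧ φ T x = x ∧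
    (∀ s : ℝ, 0 < s → s < T → φ s x ≠ x) ∧ O = Set.range (fun s : ℝ => φ s x)}


open Set Metric

section InfConv

variable {X : Type*} [MetricSpace X]

/-- Infimal convolution of `g` with the distance: the largest 1-Lipschitz minorant. -/
noncomputable def infConv (g : X → ℝ) (p : X) : ℝ := ⨅ z, (g z + dist p z)

lemma infConv_bddBelow (g : X → ℝ) (hg : ∀ z, 0 ≤ g z) (p : X) :
    BddBelow (Set.range fun z => g z + dist p z) := by
  refine ⟨0, ?_⟩
  rintro y ⟨z, rfl⟩
  exact add_nonneg (hg z) dist_nonneg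

lemma infConv_le_self (g : X → ℝ) (hg : ∀ z, 0 ≤ g z) (p : X) : infConv g p ≤ g p := by
  have : Nonempty X := ⟨p⟩
  have h := ciInf_le (infConv_bddBelow g hg p) p
  simpa [infConv] using h

lemma infConv_le_add (g : X → ℝ) (hg : ∀ z, 0 ≤ g z) (p q : X) :
    infConv g p ≤ infConv g q + dist p q := by
  have : Nonempty X := ⟨p⟩
  rw [infConv, infConv, ciInf_add (infConv_bddBelow g hg q)]
  refine ciInf_mono (infConv_bddBelow g hg p) fun z => ?_
  have := dist_triangle p q z
  linarith

lemma infConv_lipschitz (g : X → ℝ) (hg : ∀ z, 0 ≤ g z) :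
    LipschitzWith 1 (infConv g) := by
  refine LipschitzWith.of_dist_le_mul fun p q => ?_
  rw [Real.dist_eq, NNReal.coe_one, one_mul, abs_sub_le_iff]
  constructor
  · have := infConv_le_add g hg p q; linarith
  · have := infConv_le_add g hg q p; rw [dist_comm] at this; linarith

lemma infConv_continuous (g : X → ℝ) (hg : ∀ z, 0 ≤ g z) :
    Continuous (infConv g) := (infConv_lipschitz g hg).continuous

lemma infConv_pos (g : X → ℝ) (hg : ∀ z, 0 ≤ g z)
    (hloc : ∀ p : X, ∃ ε > (0:ℝ), ∃ ρ > (0:ℝ), ∀ z, dist p z < ρ → ε ≤ g z)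
    (p : X) : 0 < infConv g p := by
  have : Nonempty X := ⟨p⟩
  obtain ⟨ε, hε, ρ, hρ, h⟩ := hloc p
  have hlb : ∀ z, min ε ρ ≤ g z + dist p z := by
    intro z
    rcases lt_or_ge (dist p z) ρ with hz | hz
    · have := h z hz
      have : ε ≤ g z + dist p z := le_add_of_le_of_nonneg this dist_nonneg
      exact le_trans (min_le_left _ _) this
    · have : ρ ≤ g z + dist p z := le_add_of_nonneg_of_le (hg z) hz
      exact le_trans (min_le_right _ _) this
  have : min ε ρ ≤ infConv g p := le_ciInf hlb
  exact lt_of_lt_of_le (lt_min hε hρ) this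

end InfConv

section FlowBasics

variable {X : Type*} [MetricSpace X] {φ : ℝ → X → X}

lemma flow_orbit_shift (h0 : ∀ x, φ 0 x = x) (hadd : ∀ s t x, φ (s + t) x = φ s (φ t x))
    (a : ℝ) (x : X) :
    Set.range (fun r => φ r (φ a x)) = Set.range (fun r => φ r x) := by
  ext z
  constructor
  · rintro ⟨r, rfl⟩
    exact ⟨r + a, by simpa using hadd r a x⟩
  · rintro ⟨r, rfl⟩
    refine ⟨r - a, ?_⟩
    show φ (r - a) (φ a x) = φ r x
    rw [← hadd, sub_add_cancel]

lemma flow_periodic (hadd : ∀ s t x, φ (s + t) x = φ s (φ t x))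
    {T : ℝ} {x : X} (hT : φ T x = x) :
    Function.Periodic (fun r => φ r x) T := by
  intro r
  show φ (r + T) x = φ r x
  rw [hadd, hT]

end FlowBasics
section Kappa

variable {X : Type*} [MetricSpace X] (φ : ℝ → X → X) (d : X → ℝ)

/-- Time windows within which the flow moves `z` by at most `(2/5) * d z`. -/
noncomputable def kappaSet (z : X) : Set ℝ :=
  {a : ℝ | a ∈ Set.Icc (0:ℝ) 1 ∧ ∀ u : ℝ, |u| ≤ a → dist (φ u z) z ≤ (2/5) * d z}

noncomputable def kappa (z : X) : ℝ := sSup (kappaSet φ d z)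

variable {φ d}

lemma kappaSet_zero_mem (h0 : ∀ x, φ 0 x = x) (hd : ∀ z, 0 ≤ d z) (z : X) :
    (0:ℝ) ∈ kappaSet φ d z := by
  refine ⟨⟨le_refl _, zero_le_one⟩, fun u hu => ?_⟩
  have : u = 0 := abs_nonpos_iff.mp hu
  subst this
  rw [h0 z, dist_self]
  have := hd z; linarith

lemma kappaSet_bddAbove (z : X) : BddAbove (kappaSet φ d z) :=
  ⟨1, fun a ha => ha.1.2⟩

lemma kappa_property (h0 : ∀ x, φ 0 x = x) (hd : ∀ z, 0 ≤ d z) {z : X} {u : ℝ}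
    (hu : |u| < kappa φ d z) : dist (φ u z) z ≤ (2/5) * d z := by
  obtain ⟨a, ha, hua⟩ := exists_lt_of_lt_csSup ⟨0, kappaSet_zero_mem h0 hd z⟩ hu
  exact ha.2 u hua.le

/-- Local uniform lower bound for `kappa` near any point. -/
lemma kappa_lower_local (h0 : ∀ x, φ 0 x = x)
    (hcont : Continuous fun p : ℝ × X => φ p.1 p.2)
    (hdc : Continuous d) (hdpos : ∀ z, 0 < d z) (p : X) :
    ∃ a > (0:ℝ), ∃ ρ > (0:ℝ), ∀ z, dist p z < ρ → a ≤ kappa φ d z := by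
  have hΘ : Continuous fun q : ℝ × X => (2/5) * d q.2 - dist (φ q.1 q.2) q.2 := by
    have h1 : Continuous fun q : ℝ × X => d q.2 := hdc.comp continuous_snd
    have h2 : Continuous fun q : ℝ × X => dist (φ q.1 q.2) q.2 := hcont.dist continuous_snd
    exact (continuous_const.mul h1).sub h2
  have hopen : IsOpen {q : ℝ × X | 0 < (2/5) * d q.2 - dist (φ q.1 q.2) q.2} :=
    isOpen_lt continuous_const hΘ
  have hmem : ((0:ℝ), p) ∈ {q : ℝ × X | 0 < (2/5) * d q.2 - dist (φ q.1 q.2) q.2} := by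
    show (0:ℝ) < (2/5) * d p - dist (φ 0 p) p
    rw [h0 p, dist_self]
    have := hdpos p; linarith
  obtain ⟨r, hr0, hball⟩ := Metric.isOpen_iff.mp hopen ((0:ℝ), p) hmem
  refine ⟨min (r/2) 1, lt_min (by positivity) one_pos, r/2, by positivity, fun z hz => ?_⟩
  have hmem2 : min (r/2) 1 ∈ kappaSet φ d z := by
    refine ⟨⟨le_min (by positivity) zero_le_one, min_le_right _ _⟩, fun u hu => ?_⟩
    have hball2 : ((u, z) : ℝ × X) ∈ Metric.ball ((0:ℝ), p) r := by
      rw [Metric.mem_ball, Prod.dist_eq]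
      have h1 : dist u 0 = |u| := by rw [Real.dist_eq, sub_zero]
      have h2 : |u| ≤ r/2 := le_trans hu (min_le_left _ _)
      have h3 : dist z p < r/2 := by rwa [dist_comm] at hz
      rw [h1]
      exact max_lt (by linarith) (by linarith)
    have := hball hball2
    simp only [Set.mem_setOf_eq] at this
    linarith
  exact le_csSup (kappaSet_bddAbove z) hmem2

end Kappa
section Sep

variable {X : Type*} [MetricSpace X] {φ : ℝ → X → X}

/-- The key separation lemma: two periodic orbits with nearly equal periods either coincide
or separate, at the scale `δf`, at matched times within one period. -/
lemma sep_lemma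
    (h0 : ∀ x, φ 0 x = x) (hadd : ∀ s t x, φ (s + t) x = φ s (φ t x))
    (δ₁ : X → ℝ) (hδ₁pos : ∀ x, 0 < δ₁ x)
    (hδ₁exp : ∀ x y : X, ∀ α : ℝ → ℝ, Continuous α → α 0 = 0 →
      (∀ r : ℝ, dist (φ r x) (φ (α r) y) < δ₁ (φ r x)) →
      ∃ s ∈ Set.Icc (-1:ℝ) 1, φ s x = y)
    (d : X → ℝ) (hd_le : ∀ z, d z ≤ δ₁ z) (hd_pos : ∀ z, 0 < d z)
    (hd_lip : ∀ p q : X, d p ≤ d q + dist p q)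
    (δf : X → ℝ) (hδf_le : ∀ z, δf z ≤ d z / 4)
    (hδf_kappa : ∀ z : X, ∀ u : ℝ, |u| ≤ δf z → dist (φ u z) z ≤ (2/5) * d z)
    (t b : ℝ)
    (x y : X) (T₁ T₂ : ℝ)
    (hT₁pos : 0 < T₁) (hT₁t : T₁ ≤ t) (hT₂pos : 0 < T₂)
    (hφT₁ : φ T₁ x = x) (hφT₂ : φ T₂ y = y)
    (hΔ : |T₁ - T₂| ≤ b)
    (hy_not : y ∉ Set.range (fun s : ℝ => φ s x))
    (hbz : ∀ s ∈ Set.Icc (0:ℝ) t, b ≤ δf (φ s y)) :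
    ∃ s ∈ Set.Icc (0:ℝ) t, δf (φ s x) ≤ dist (φ s x) (φ s y) := by
  classical
  set c : ℝ := T₂ / T₁ with hc
  -- expansivity along the linear reparametrization
  have hnot : ¬ ∀ r : ℝ, dist (φ r x) (φ (c * r) y) < δ₁ (φ r x) := by
    intro hsh
    obtain ⟨s, _, hs⟩ := hδ₁exp x y (fun r => c * r)
      (continuous_const.mul continuous_id) (mul_zero c) hsh
    exact hy_not ⟨s, hs⟩
  push_neg at hnot
  obtain ⟨r, hr⟩ := hnot
  -- reduce r to [0, T₁)
  set k : ℤ := ⌊r / T₁⌋ with hk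
  set s : ℝ := r - k * T₁ with hs
  have hs0 : 0 ≤ s := by
    have h1 : (k:ℝ) ≤ r / T₁ := Int.floor_le _
    have := (mul_le_mul_iff_of_pos_right hT₁pos).mpr h1
    rw [div_mul_cancel₀ _ (ne_of_gt hT₁pos)] at this
    simp only [hs]; linarith
  have hs1 : s < T₁ := by
    have h1 : r / T₁ < k + 1 := Int.lt_floor_add_one _
    have := (mul_lt_mul_iff_of_pos_right hT₁pos).mpr h1
    rw [div_mul_cancel₀ _ (ne_of_gt hT₁pos)] at this
    simp only [hs]; nlinarith
  have hper₁ : Function.Periodic (fun r => φ r x) T₁ := flow_periodic hadd hφT₁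
  have hper₂ : Function.Periodic (fun r => φ r y) T₂ := flow_periodic hadd hφT₂
  have px : φ s x = φ r x := by
    have := hper₁.sub_int_mul_eq (x := r) k
    simpa [hs] using this
  have py : φ (c * s) y = φ (c * r) y := by
    have h1 : c * r - (k:ℝ) * T₂ = c * s := by
      have hcT : c * T₁ = T₂ := div_mul_cancel₀ _ (ne_of_gt hT₁pos)
      calc c * r - (k:ℝ) * T₂ = c * r - (k:ℝ) * (c * T₁) := by rw [hcT]
        _ = c * (r - (k:ℝ) * T₁) := by ring
        _ = c * s := by rw [hs]
    have := hper₂.sub_int_mul_eq (x := c * r) k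
    rw [h1] at this
    exact this
  rw [← px, ← py] at hr
  set w : X := φ s x with hw
  set z : X := φ s y with hz
  set u : ℝ := c * s - s with hu
  have hφu : φ u z = φ (c * s) y := by
    rw [hz, ← hadd]
    congr 1
    ring
  have hu_bound : |u| ≤ |T₁ - T₂| := by
    have hueq : u = (s / T₁) * (T₂ - T₁) := by
      field_simp [hu, hc]
      rw [hu, hc, sub_mul, mul_comm (T₂ / T₁) s, mul_assoc, div_mul_cancel₀ _ (ne_of_gt hT₁pos)]
      ring
    rw [hueq, abs_mul, abs_sub_comm T₁ T₂]
    have h1 : |s / T₁| = s / T₁ := abs_of_nonneg (by positivity)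
    rw [h1]
    have h2 : s / T₁ ≤ 1 := (div_le_one hT₁pos).mpr hs1.le
    nlinarith [abs_nonneg (T₂ - T₁), div_nonneg hs0 hT₁pos.le]
  refine ⟨s, ⟨hs0, le_trans hs1.le hT₁t⟩, ?_⟩
  by_contra hcon
  push_neg at hcon
  -- hcon : dist w z < δf w
  have hb_le : b ≤ δf z := hbz s ⟨hs0, le_trans hs1.le hT₁t⟩
  have hu_le : |u| ≤ δf z := le_trans hu_bound (le_trans hΔ hb_le)
  have h2 : dist (φ u z) z ≤ (2/5) * d z := hδf_kappa z u hu_le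
  have h3 : d z ≤ d w + dist z w := hd_lip z w
  have h4 : dist z w = dist w z := dist_comm z w
  have h5 : δf w ≤ d w / 4 := hδf_le w
  have h6 : d z < (5/4) * d w := by rw [h4] at h3; linarith
  have h7 : dist (φ u z) z < d w / 2 := by nlinarith
  have h8 : δ₁ w ≤ dist w (φ u z) := by rw [hφu]; exact hr
  have h9 : dist w (φ u z) ≤ dist w z + dist z (φ u z) := dist_triangle _ _ _
  have h10 : dist z (φ u z) = dist (φ u z) z := dist_comm _ _
  have h11 : d w ≤ δ₁ w := hd_le w
  have h12 : 0 < d w := hd_pos w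
  linarith
end Sep
section Count

variable {X : Type*} [MetricSpace X] {φ : ℝ → X → X}

lemma count_le
    (h0 : ∀ x, φ 0 x = x) (hadd : ∀ s t x, φ (s + t) x = φ s (φ t x))
    (hcont : Continuous fun p : ℝ × X => φ p.1 p.2)
    (K₀ : Set X) (hK₀cpt : IsCompact K₀) (hK₀ne : K₀.Nonempty)
    (hiso' : ∀ x : X, (¬ ∀ r : ℝ, φ r x = x) → ∃ s : ℝ, φ s x ∈ K₀)
    (δf : X → ℝ) (hδfc : Continuous δf) (hδfpos : ∀ z, 0 < δf z)
    (hδf1 : ∀ z, δf z ≤ 1)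
    (t : ℝ) (ht : 1 ≤ t)
    (hSEP : ∀ x y : X, x ∈ K₀ → y ∈ K₀ → ∀ T₁ T₂ : ℝ, 0 < T₁ → T₁ ≤ t → 0 < T₂ →
        φ T₁ x = x → φ T₂ y = y → |T₁ - T₂| ≤ betaInf φ t δf K₀ →
        y ∉ Set.range (fun s : ℝ => φ s x) →
        ∃ s ∈ Set.Icc (0:ℝ) t, δf (φ s x) ≤ dist (φ s x) (φ s y)) :
    0 < betaInf φ t δf K₀ ∧ betaInf φ t δf K₀ ≤ 1 ∧ 1 ≤ sepMax φ t δf K₀ ∧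
      periodicOrbitCount φ t ≤ (⌊t / betaInf φ t δf K₀⌋₊ + 1) * sepMax φ t δf K₀ := by
  classical
  set b : ℝ := betaInf φ t δf K₀ with hbdef
  set M : ℕ := sepMax φ t δf K₀ with hMdef
  set m : ℕ := ⌊t / b⌋₊ with hmdef
  have ht0 : (0:ℝ) ≤ t := le_trans zero_le_one ht
  -- the image set defining betaInf
  have hgc : Continuous fun p : X × ℝ => δf (φ p.2 p.1) :=
    hδfc.comp (hcont.comp (continuous_snd.prodMk continuous_fst))
  have himgc : IsCompact ((fun p : X × ℝ => δf (φ p.2 p.1)) '' (K₀ ×ˢ Set.Icc (0:ℝ) t)) :=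
    (hK₀cpt.prod isCompact_Icc).image hgc
  have himgne : ((fun p : X × ℝ => δf (φ p.2 p.1)) '' (K₀ ×ˢ Set.Icc (0:ℝ) t)).Nonempty := by
    refine ⟨δf (φ 0 hK₀ne.choose), ⟨(hK₀ne.choose, 0), ?_, rfl⟩⟩
    exact Set.mem_prod.mpr ⟨hK₀ne.choose_spec, ⟨le_refl _, ht0⟩⟩
  have hbpos : 0 < b := by
    have hmem : b ∈ ((fun p : X × ℝ => δf (φ p.2 p.1)) '' (K₀ ×ˢ Set.Icc (0:ℝ) t)) := by
      rw [hbdef, betaInf]; exact IsCompact.sInf_mem himgc himgne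
    obtain ⟨p, _, hp⟩ := hmem
    rw [← hp]
    exact hδfpos _
  have hble : ∀ y ∈ K₀, ∀ s ∈ Set.Icc (0:ℝ) t, b ≤ δf (φ s y) := by
    intro y hy s hs
    rw [hbdef, betaInf]
    exact csInf_le himgc.bddBelow ⟨(y, s), Set.mem_prod.mpr ⟨hy, hs⟩, rfl⟩
  -- uniform continuity ingredient
  have hUC : ∃ r > (0:ℝ), ∀ x' ∈ K₀, ∀ y' ∈ K₀, dist x' y' < r →
      ∀ s ∈ Set.Icc (0:ℝ) t, dist (φ s x') (φ s y') < b := by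
    have hc2 := (isCompact_Icc.prod hK₀cpt).uniformContinuousOn_of_continuous
      (hcont.continuousOn (s := Set.Icc (0:ℝ) t ×ˢ K₀))
    rw [Metric.uniformContinuousOn_iff] at hc2
    obtain ⟨r, hr0, hr⟩ := hc2 b hbpos
    refine ⟨r, hr0, fun x' hx' y' hy' hxy s hs => ?_⟩
    have hd : dist ((s, x') : ℝ × X) ((s, y') : ℝ × X) < r := by
      rw [Prod.dist_eq]
      simp only [dist_self]
      rw [max_eq_right dist_nonneg]
      exact hxy
    exact hr (s, x') (Set.mem_prod.mpr ⟨hs, hx'⟩) (s, y') (Set.mem_prod.mpr ⟨hs, hy'⟩) hd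
  obtain ⟨r, hr0, hr⟩ := hUC
  -- covering number bound
  obtain ⟨C, hCfin, hCcov⟩ := (Metric.totallyBounded_iff.mp hK₀cpt.totallyBounded)
    (r/2) (by positivity)
  set n₀ : ℕ := hCfin.toFinset.card with hn₀def
  -- any separated finset has card at most n₀
  have hcard : ∀ E : Finset X, (↑E ⊆ K₀) →
      (∀ x' ∈ E, ∀ y' ∈ E, x' ≠ y' →
        ∃ s ∈ Set.Icc (0:ℝ) t, δf (φ s x') ≤ dist (φ s x') (φ s y')) →
      E.card ≤ n₀ := by
    intro E hEK hEsep
    have hsep' : ∀ x' ∈ E, ∀ y' ∈ E, x' ≠ y' → r ≤ dist x' y' := by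
      intro x' hx' y' hy' hne
      by_contra hlt
      push_neg at hlt
      obtain ⟨s, hsI, hsd⟩ := hEsep x' hx' y' hy' hne
      have h1 := hr x' (hEK hx') y' (hEK hy') hlt s hsI
      have h2 := hble x' (hEK hx') s hsI
      linarith
    set f : X → X := fun e => if h : ∃ c ∈ C, e ∈ Metric.ball c (r/2) then h.choose else e
      with hfdef
    have hfspec : ∀ e ∈ E, f e ∈ C ∧ e ∈ Metric.ball (f e) (r/2) := by
      intro e he
      have : e ∈ ⋃ y ∈ C, Metric.ball y (r/2) := hCcov (hEK he)
      rw [Set.mem_iUnion₂] at this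
      obtain ⟨c, hc, hac⟩ := this
      have hex : ∃ c ∈ C, e ∈ Metric.ball c (r/2) := ⟨c, hc, hac⟩
      rw [hfdef]
      simp only [dif_pos hex]
      exact ⟨hex.choose_spec.1, hex.choose_spec.2⟩
    refine Finset.card_le_card_of_injOn f (fun a ha => ?_) ?_
    · exact hCfin.mem_toFinset.mpr (hfspec a ha).1
    · intro a ha a' ha' hfa
      by_contra hne
      have h1 := (hfspec a ha).2
      have h2 := (hfspec a' ha').2
      rw [hfa] at h1
      have h3 : dist a a' < r := by
        rw [Metric.mem_ball] at h1 h2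
        have := dist_triangle a (f a') a'
        rw [dist_comm (f a') a'] at this
        linarith
      have h4 := hsep' a ha a' ha' hne
      linarith
  -- membership bound for sepMax
  have hbddA : BddAbove {n : ℕ | ∃ E : Finset X, ↑E ⊆ K₀ ∧ E.card = n ∧
      ∀ x ∈ E, ∀ y ∈ E, x ≠ y → ∃ s ∈ Set.Icc (0:ℝ) t,
        δf (φ s x) ≤ dist (φ s x) (φ s y)} := by
    refine ⟨n₀, fun n hn => ?_⟩
    obtain ⟨E, hEK, rfl, hEsep⟩ := hn
    exact hcard E hEK hEsep
  have hmemM : ∀ E : Finset X, ↑E ⊆ K₀ →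
      (∀ x ∈ E, ∀ y ∈ E, x ≠ y → ∃ s ∈ Set.Icc (0:ℝ) t,
        δf (φ s x) ≤ dist (φ s x) (φ s y)) → E.card ≤ M := by
    intro E h1 h2
    rw [hMdef, sepMax]
    exact le_csSup hbddA ⟨E, h1, rfl, h2⟩
  -- the set of periodic orbits
  set OP : Set (Set X) := {O : Set X | ∃ (x : X) (T : ℝ), 0 < T ∧ T ≤ t ∧ φ T x = x ∧
    (∀ s : ℝ, 0 < s → s < T → φ s x ≠ x) ∧ O = Set.range (fun s : ℝ => φ s x)} with hOPdef
  have hNP : periodicOrbitCount φ t = OP.ncard := by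
    rw [← Nat.card_coe_set_eq]
    rfl
  -- choose representatives
  have hrep : ∀ O ∈ OP, ∃ p : X × ℝ, p.1 ∈ K₀ ∧ 0 < p.2 ∧ p.2 ≤ t ∧ φ p.2 p.1 = p.1 ∧
      O = Set.range (fun s : ℝ => φ s p.1) := by
    rintro O ⟨x, T, hT0, hTt, hTx, hmin, rfl⟩
    have hnf : ¬ ∀ r : ℝ, φ r x = x := by
      intro hall
      exact hmin (T/2) (by linarith) (by linarith) (hall (T/2))
    obtain ⟨s₀, hs₀⟩ := hiso' x hnf
    refine ⟨(φ s₀ x, T), hs₀, hT0, hTt, ?_, ?_⟩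
    · show φ T (φ s₀ x) = φ s₀ x
      rw [← hadd, add_comm, hadd, hTx]
    · exact (flow_orbit_shift h0 hadd s₀ x).symm
  set F : Set X → X × ℝ := fun O => if h : O ∈ OP then (hrep O h).choose else (hK₀ne.choose, 1)
    with hFdef
  have hFspec : ∀ O ∈ OP, (F O).1 ∈ K₀ ∧ 0 < (F O).2 ∧ (F O).2 ≤ t ∧
      φ (F O).2 (F O).1 = (F O).1 ∧ O = Set.range (fun s : ℝ => φ s (F O).1) := by
    intro O hO
    rw [hFdef]
    simp only [dif_pos hO]
    exact (hrep O hO).choose_spec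
  have hinj : Set.InjOn (fun O => (F O).1) OP := by
    intro O₁ h₁ O₂ h₂ heq
    rw [(hFspec O₁ h₁).2.2.2.2, (hFspec O₂ h₂).2.2.2.2]
    simp only at heq
    rw [heq]
  -- classes
  set kcl : Set X → ℕ := fun O => ⌊(F O).2 / b⌋₊ with hkcldef
  have hkm : ∀ O ∈ OP, kcl O ≤ m := by
    intro O hO
    rw [hkcldef, hmdef]
    refine Nat.floor_le_floor ?_
    gcongr
    exact (hFspec O hO).2.2.1
  -- the class pieces
  set Epiece : ℕ → Set X := fun j => (fun O => (F O).1) '' {O ∈ OP | kcl O = j} with hEpdef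
  -- every finset inside a class piece is separated, hence small
  have hEcard : ∀ j : ℕ, ∀ G : Finset X, ↑G ⊆ Epiece j → G.card ≤ M := by
    intro j G hG
    refine hmemM G ?_ ?_
    · intro e he
      obtain ⟨O, hO, rfl⟩ := hG he
      exact (hFspec O hO.1).1
    · intro x' hx' y' hy' hne
      obtain ⟨O₁, hO₁, he₁⟩ := hG hx'
      obtain ⟨O₂, hO₂, he₂⟩ := hG hy'
      have hOne : O₁ ≠ O₂ := by
        intro h
        rw [h, he₂] at he₁
        exact hne he₁.symm
      obtain ⟨hK₁, hT₁0, hT₁t, hφ₁, hOr₁⟩ := hFspec O₁ hO₁.1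
      obtain ⟨hK₂, hT₂0, hT₂t, hφ₂, hOr₂⟩ := hFspec O₂ hO₂.1
      have hnotr : y' ∉ Set.range (fun s : ℝ => φ s x') := by
        rintro ⟨a, ha⟩
        apply hOne
        rw [hOr₁, hOr₂, show (F O₁).1 = x' from he₁, show (F O₂).1 = y' from he₂, ← ha]
        exact (flow_orbit_shift h0 hadd a x').symm
      have hΔ : |(F O₁).2 - (F O₂).2| ≤ b := by
        have hkeq : kcl O₁ = kcl O₂ := by rw [hO₁.2, hO₂.2]
        simp only [hkcldef] at hkeq
        set T₁ := (F O₁).2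
        set T₂ := (F O₂).2
        have h1 : ((⌊T₁ / b⌋₊ : ℕ) : ℝ) ≤ T₁ / b := Nat.floor_le (by positivity)
        have h2 : T₁ / b < (⌊T₁ / b⌋₊ : ℕ) + 1 := Nat.lt_floor_add_one _
        have h3 : ((⌊T₂ / b⌋₊ : ℕ) : ℝ) ≤ T₂ / b := Nat.floor_le (by positivity)
        have h4 : T₂ / b < (⌊T₂ / b⌋₊ : ℕ) + 1 := Nat.lt_floor_add_one _
        rw [hkeq] at h1 h2
        have h5 : T₁ / b - T₂ / b < 1 := by linarith
        have h6 : T₂ / b - T₁ / b < 1 := by linarith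
        rw [abs_sub_le_iff]
        constructor
        · have := (div_lt_one hbpos).mp (by rw [sub_div]; exact h5)
          linarith
        · have := (div_lt_one hbpos).mp (by rw [sub_div]; exact h6)
          linarith
      have := hSEP x' y' (he₁ ▸ hK₁) (he₂ ▸ hK₂) (F O₁).2 (F O₂).2 hT₁0 hT₁t hT₂0
        (by rw [← he₁]; exact hφ₁) (by rw [← he₂]; exact hφ₂) hΔ hnotr
      exact this
  have hEfin : ∀ j : ℕ, (Epiece j).Finite := by
    intro j
    by_contra hinf
    obtain ⟨G, hGsub, hGcard⟩ := Set.Infinite.exists_subset_card_eq hinf (M + 1)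
    have := hEcard j G hGsub
    omega
  have hEncard : ∀ j : ℕ, (Epiece j).ncard ≤ M := by
    intro j
    rw [Set.ncard_eq_toFinset_card _ (hEfin j)]
    refine hEcard j _ ?_
    simp [Set.Finite.coe_toFinset]
  -- finite unions
  have hU : ∀ n : ℕ, (⋃ j ∈ Finset.range n, Epiece j).Finite ∧
      (⋃ j ∈ Finset.range n, Epiece j).ncard ≤ n * M := by
    intro n
    induction n with
    | zero => simp
    | succ n ih =>
      have hstep : (⋃ j ∈ Finset.range (n+1), Epiece j) =
          Epiece n ∪ ⋃ j ∈ Finset.range n, Epiece j := by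
        rw [Finset.range_add_one]
        simp [Set.biUnion_insert]
      constructor
      · rw [hstep]
        exact (hEfin n).union ih.1
      · rw [hstep]
        calc (Epiece n ∪ ⋃ j ∈ Finset.range n, Epiece j).ncard
            ≤ (Epiece n).ncard + (⋃ j ∈ Finset.range n, Epiece j).ncard :=
              Set.ncard_union_le _ _
          _ ≤ M + n * M := add_le_add (hEncard n) ih.2
          _ = (n + 1) * M := by ring
  -- the image of all representatives
  have hRsub : (fun O => (F O).1) '' OP ⊆ ⋃ j ∈ Finset.range (m + 1), Epiece j := by
    rintro e ⟨O, hO, rfl⟩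
    have hk := hkm O hO
    refine Set.mem_biUnion (Finset.mem_range.mpr (Nat.lt_succ_of_le hk)) ?_
    exact ⟨O, ⟨hO, rfl⟩, rfl⟩
  have hfinal : OP.ncard ≤ (m + 1) * M := by
    have h1 : OP.ncard = ((fun O => (F O).1) '' OP).ncard :=
      (Set.ncard_image_of_injOn hinj).symm
    rw [h1]
    calc ((fun O => (F O).1) '' OP).ncard
        ≤ (⋃ j ∈ Finset.range (m + 1), Epiece j).ncard :=
          Set.ncard_le_ncard hRsub (hU (m+1)).1
      _ ≤ (m + 1) * M := (hU (m+1)).2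
  have hb1 : b ≤ 1 := by
    have := hble hK₀ne.choose hK₀ne.choose_spec 0 ⟨le_refl _, ht0⟩
    exact this.trans (hδf1 _)
  have hM1 : 1 ≤ M := by
    rw [hMdef, sepMax]
    refine le_csSup hbddA ⟨{hK₀ne.choose}, ?_, Finset.card_singleton _, ?_⟩
    · intro e he
      simp only [Finset.coe_singleton, Set.mem_singleton_iff] at he
      rw [he]; exact hK₀ne.choose_spec
    · intro x hx y hy hxy
      simp only [Finset.mem_singleton] at hx hy
      exact absurd (hx.trans hy.symm) hxy
  refine ⟨hbpos, hb1, hM1, ?_⟩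
  rw [hNP]
  exact hfinal

end Count

section Construct

variable {X : Type*} [MetricSpace X] {φ : ℝ → X → X}

lemma construct_deltas
    (h0 : ∀ x, φ 0 x = x)
    (hcont : Continuous fun p : ℝ × X => φ p.1 p.2)
    (δ₁ : X → ℝ) (hδ₁c : Continuous δ₁) (hδ₁pos : ∀ x, 0 < δ₁ x) :
    ∃ d δf : X → ℝ,
      (∀ z, 0 < d z) ∧ (∀ z, d z ≤ δ₁ z) ∧ (∀ p q, d p ≤ d q + dist p q) ∧
      Continuous δf ∧ (∀ z, 0 < δf z) ∧ (∀ z, δf z ≤ d z / 4) ∧ (∀ z, δf z ≤ 1) ∧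
      (∀ z u, |u| ≤ δf z → dist (φ u z) z ≤ (2/5) * d z) := by
  classical
  set g₀ : X → ℝ := fun z => min (δ₁ z) 1 with hg₀
  have hg₀c : Continuous g₀ := hδ₁c.min continuous_const
  have hg₀pos : ∀ z, 0 < g₀ z := fun z => lt_min (hδ₁pos z) one_pos
  have hg₀nn : ∀ z, 0 ≤ g₀ z := fun z => (hg₀pos z).le
  -- local lower bound for a positive continuous function
  have hlocal : ∀ (f : X → ℝ), Continuous f → (∀ z, 0 < f z) → ∀ p : X,
      ∃ ρ > (0:ℝ), ∀ z, dist p z < ρ → f p / 2 ≤ f z := by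
    intro f hfc hfpos p
    have hopen : IsOpen (f ⁻¹' Set.Ioi (f p / 2)) := isOpen_Ioi.preimage hfc
    have hmem : p ∈ f ⁻¹' Set.Ioi (f p / 2) := by
      simp only [Set.mem_preimage, Set.mem_Ioi]
      have := hfpos p; linarith
    obtain ⟨ρ, hρ0, hball⟩ := Metric.isOpen_iff.mp hopen p hmem
    refine ⟨ρ, hρ0, fun z hz => ?_⟩
    have : z ∈ f ⁻¹' Set.Ioi (f p / 2) := hball (by rwa [Metric.mem_ball, dist_comm])
    simp only [Set.mem_preimage, Set.mem_Ioi] at this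
    linarith
  set d : X → ℝ := infConv g₀ with hd
  have hd_cont : Continuous d := infConv_continuous g₀ hg₀nn
  have hd_pos : ∀ z, 0 < d z := by
    refine infConv_pos g₀ hg₀nn ?_
    intro p
    obtain ⟨ρ, hρ0, hρ⟩ := hlocal g₀ hg₀c hg₀pos p
    exact ⟨g₀ p / 2, by have := hg₀pos p; linarith, ρ, hρ0, hρ⟩
  have hd_le : ∀ z, d z ≤ δ₁ z := fun z =>
    (infConv_le_self g₀ hg₀nn z).trans (min_le_left _ _)
  have hd_lip : ∀ p q, d p ≤ d q + dist p q := infConv_le_add g₀ hg₀nn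
  -- kappa for d
  have hκpos : ∀ z, 0 < kappa φ d z := by
    intro z
    obtain ⟨a, ha0, ρ, hρ0, hρ⟩ := kappa_lower_local h0 hcont hd_cont hd_pos z
    have := hρ z (by rwa [dist_self])
    linarith
  have hκnn : ∀ z, 0 ≤ kappa φ d z := fun z => (hκpos z).le
  set G : X → ℝ := fun z => min (min 1 (d z / 4)) (kappa φ d z / 2) with hG
  have hGnn : ∀ z, 0 ≤ G z := by
    intro z
    refine le_min (le_min zero_le_one ?_) ?_
    · have := hd_pos z; linarith
    · have := hκnn z; linarith
  set δf : X → ℝ := infConv G with hδf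
  have hδfc : Continuous δf := infConv_continuous G hGnn
  have hδfpos : ∀ z, 0 < δf z := by
    refine infConv_pos G hGnn ?_
    intro p
    obtain ⟨a, ha0, ρ₁, hρ₁0, hρ₁⟩ := kappa_lower_local h0 hcont hd_cont hd_pos p
    obtain ⟨ρ₂, hρ₂0, hρ₂⟩ := hlocal d hd_cont hd_pos p
    refine ⟨min (min 1 (d p / 8)) (a / 2), ?_, min ρ₁ ρ₂, lt_min hρ₁0 hρ₂0, ?_⟩
    · have := hd_pos p
      refine lt_min (lt_min one_pos (by linarith)) (by linarith)
    · intro z hz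
      have hz₁ : dist p z < ρ₁ := lt_of_lt_of_le hz (min_le_left _ _)
      have hz₂ : dist p z < ρ₂ := lt_of_lt_of_le hz (min_le_right _ _)
      have h1 := hρ₁ z hz₁
      have h2 := hρ₂ z hz₂
      rw [hG]
      refine le_min (le_min ?_ ?_) ?_
      · exact le_trans (min_le_left _ _) (min_le_left _ _)
      · refine le_trans (le_trans (min_le_left _ _) (min_le_right _ _)) ?_
        linarith
      · refine le_trans (min_le_right _ _) ?_
        linarith
  have hδf_le_G : ∀ z, δf z ≤ G z := infConv_le_self G hGnn
  have hδf_le : ∀ z, δf z ≤ d z / 4 := fun z =>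
    (hδf_le_G z).trans ((min_le_left _ _).trans (min_le_right _ _))
  have hδf_le1 : ∀ z, δf z ≤ 1 := fun z =>
    (hδf_le_G z).trans ((min_le_left _ _).trans (min_le_left _ _))
  have hδf_kappa : ∀ z u, |u| ≤ δf z → dist (φ u z) z ≤ (2/5) * d z := by
    intro z u hu
    have h1 : |u| < kappa φ d z := by
      have h2 := (hu.trans (hδf_le_G z)).trans (min_le_right _ _)
      have := hκpos z
      linarith
    exact kappa_property h0 (fun w => (hd_pos w).le) h1
  exact ⟨d, δf, hd_pos, hd_le, hd_lip, hδfc, hδfpos, hδf_le, hδf_le1, hδf_kappa⟩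

end Construct
section MainAssembly

variable {X : Type*} [MetricSpace X]

lemma le_eStar (φ : ℝ → X → X) (K : Set X) (hK : IsCompact K)
    (δ : X → ℝ) (hδc : Continuous δ) (hδp : ∀ x, 0 < δ x) :
    Filter.limsup (fun t : ℝ =>
        (((1 / t) * Real.log ((sepMax φ t δ K : ℝ) / betaInf φ t δ K)) : EReal))
      Filter.atTop ≤ eStar φ := by
  rw [eStar]
  exact le_iSup_of_le K (le_iSup_of_le hK (le_iSup_of_le δ
    (le_iSup_of_le hδc (le_iSup_of_le hδp le_rfl))))

lemma eStar_nonneg (φ : ℝ → X → X) : ((0:ℝ) : EReal) ≤ eStar φ := by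
  have hsep : ∀ t : ℝ, sepMax φ t (fun _ => (1:ℝ)) (∅ : Set X) = 0 := by
    intro t
    rw [sepMax]
    have : {n : ℕ | ∃ E : Finset X, ↑E ⊆ (∅ : Set X) ∧ E.card = n ∧
        ∀ x ∈ E, ∀ y ∈ E, x ≠ y → ∃ s ∈ Set.Icc (0 : ℝ) t,
          (fun _ => (1:ℝ)) (φ s x) ≤ dist (φ s x) (φ s y)} = {0} := by
      ext n
      simp only [Set.mem_setOf_eq, Set.mem_singleton_iff]
      constructor
      · rintro ⟨E, hE, rfl, -⟩
        have : E = ∅ := by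
          rw [← Finset.coe_eq_empty]
          exact Set.subset_empty_iff.mp hE
        rw [this, Finset.card_empty]
      · rintro rfl
        exact ⟨∅, by simp, Finset.card_empty, by simp⟩
    rw [this, csSup_singleton]
  have hbeta : ∀ t : ℝ, betaInf φ t (fun _ => (1:ℝ)) (∅ : Set X) = 0 := by
    intro t
    rw [betaInf]
    rw [Set.empty_prod, Set.image_empty, Real.sInf_empty]
  have hterm : Filter.limsup (fun t : ℝ =>
      (((1 / t) * Real.log ((sepMax φ t (fun _ => (1:ℝ)) (∅ : Set X) : ℝ) /
        betaInf φ t (fun _ => (1:ℝ)) (∅ : Set X))) : EReal)) Filter.atTop = ((0:ℝ) : EReal) := by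
    have : (fun t : ℝ => (((1 / t) * Real.log ((sepMax φ t (fun _ => (1:ℝ)) (∅ : Set X) : ℝ) /
        betaInf φ t (fun _ => (1:ℝ)) (∅ : Set X))) : EReal)) = fun _ => ((0:ℝ) : EReal) := by
      funext t
      rw [hsep t, hbeta t]
      norm_num
    rw [this]
    exact Filter.limsup_const _
  calc ((0:ℝ) : EReal) = _ := hterm.symm
    _ ≤ eStar φ := le_eStar φ ∅ isCompact_empty (fun _ => (1:ℝ)) continuous_const
        (fun _ => one_pos)

end MainAssembly
theorem stmt19 {X : Type*} [MetricSpace X] (φ : ℝ → X → X)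
    (hflow : IsFlow φ) (hexp : TopExpansive φ)
    (hiso : ∃ K : Set X, IsCompact K ∧
      ∀ x : X, (¬ ∀ t : ℝ, φ t x = x) → ∃ s : ℝ, φ s x ∈ K) :
    Filter.limsup
      (fun t : ℝ => (((1 / t) * Real.log (periodicOrbitCount φ t : ℝ)) : EReal))
      Filter.atTop ≤ eStar φ := by
  classical
  obtain ⟨h0, hadd, hcont⟩ := hflow
  obtain ⟨K₀, hK₀cpt, hiso'⟩ := hiso
  by_cases hK₀ne : K₀.Nonempty
  · -- main case
    obtain ⟨δ₁, hδ₁c, hδ₁pos, hδ₁exp⟩ := hexp 1 one_pos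
    obtain ⟨d, δf, hd_pos, hd_le, hd_lip, hδfc, hδfpos, hδf_le, hδf_le1, hδf_kappa⟩ :=
      construct_deltas h0 hcont δ₁ hδ₁c hδ₁pos
    have hbz : ∀ t : ℝ, ∀ y ∈ K₀, ∀ s ∈ Set.Icc (0:ℝ) t, betaInf φ t δf K₀ ≤ δf (φ s y) := by
      intro t y hy s hs
      rw [betaInf]
      refine csInf_le ⟨0, ?_⟩ ⟨(y, s), Set.mem_prod.mpr ⟨hy, hs⟩, rfl⟩
      rintro v ⟨p, -, rfl⟩
      exact (hδfpos _).le
    have hSEP : ∀ t : ℝ, ∀ x y : X, x ∈ K₀ → y ∈ K₀ → ∀ T₁ T₂ : ℝ,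
        0 < T₁ → T₁ ≤ t → 0 < T₂ →
        φ T₁ x = x → φ T₂ y = y → |T₁ - T₂| ≤ betaInf φ t δf K₀ →
        y ∉ Set.range (fun s : ℝ => φ s x) →
        ∃ s ∈ Set.Icc (0:ℝ) t, δf (φ s x) ≤ dist (φ s x) (φ s y) := by
      intro t x y hx hy T₁ T₂ h1 h2 h3 h4 h5 h6 h7
      exact sep_lemma h0 hadd δ₁ hδ₁pos hδ₁exp d hd_le hd_pos hd_lip δf hδf_le hδf_kappa
        t (betaInf φ t δf K₀) x y T₁ T₂ h1 h2 h3 h4 h5 h6 h7 (hbz t y hy)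
    have hcount := fun (t:ℝ) (ht : 1 ≤ t) => count_le h0 hadd hcont K₀ hK₀cpt hK₀ne hiso'
        δf hδfc hδfpos hδf_le1 t ht (hSEP t)
    have hbound : ∀ t : ℝ, 1 ≤ t →
        (1/t) * Real.log ((periodicOrbitCount φ t : ℕ) : ℝ) ≤
        (1/t) * (Real.log 2 + Real.log t) +
        (1/t) * Real.log ((sepMax φ t δf K₀ : ℝ) / betaInf φ t δf K₀) := by
      intro t ht
      obtain ⟨hbpos, hb1, hM1, hNle⟩ := hcount t ht
      set b := betaInf φ t δf K₀
      set M := sepMax φ t δf K₀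
      set N := periodicOrbitCount φ t
      have ht0 : (0:ℝ) < t := lt_of_lt_of_le one_pos ht
      have hMb1 : (1:ℝ) ≤ (M:ℝ)/b := by
        rw [le_div_iff₀ hbpos, one_mul]
        calc b ≤ 1 := hb1
          _ ≤ (M:ℝ) := by exact_mod_cast hM1
      have hlogs : 0 ≤ Real.log ((M:ℝ)/b) := Real.log_nonneg hMb1
      have hlogt : 0 ≤ Real.log t := Real.log_nonneg ht
      have hlog2 : 0 ≤ Real.log 2 := Real.log_nonneg one_le_two
      have ht1 : 0 ≤ 1/t := by positivity
      rcases Nat.eq_zero_or_pos N with hN0 | hNpos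
      · rw [hN0]
        simp only [Nat.cast_zero, Real.log_zero, mul_zero]
        positivity
      · have hN1 : (1:ℝ) ≤ (N:ℝ) := by exact_mod_cast hNpos
        have htb1 : (1:ℝ) ≤ t/b := by
          rw [le_div_iff₀ hbpos, one_mul]; exact hb1.trans ht
        have hNle' : (N:ℝ) ≤ 2 * t * ((M:ℝ)/b) := by
          have h1 : (N:ℝ) ≤ ((⌊t/b⌋₊ + 1 : ℕ):ℝ) * (M:ℝ) := by exact_mod_cast hNle
          have hfloor : ((⌊t/b⌋₊ : ℕ) : ℝ) ≤ t/b := Nat.floor_le (by positivity)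
          have h2 : ((⌊t/b⌋₊ + 1 : ℕ):ℝ) ≤ 2 * (t/b) := by
            push_cast
            linarith
          have h3 : (0:ℝ) ≤ (M:ℝ) := by positivity
          calc (N:ℝ) ≤ ((⌊t/b⌋₊ + 1 : ℕ):ℝ) * (M:ℝ) := h1
            _ ≤ 2 * (t/b) * (M:ℝ) := mul_le_mul_of_nonneg_right h2 h3
            _ = 2 * t * ((M:ℝ)/b) := by ring
        have hlogle : Real.log (N:ℝ) ≤ Real.log 2 + Real.log t + Real.log ((M:ℝ)/b) := by
          have h4 := Real.log_le_log (by linarith : (0:ℝ) < (N:ℝ)) hNle'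
          have h5 : Real.log (2 * t * ((M:ℝ)/b)) =
              Real.log 2 + Real.log t + Real.log ((M:ℝ)/b) := by
            rw [Real.log_mul (by positivity) (by linarith : ((M:ℝ)/b) ≠ 0)]
            rw [Real.log_mul (by norm_num) (by linarith : t ≠ 0)]
          rw [h5] at h4
          exact h4
        calc (1/t) * Real.log (N:ℝ)
            ≤ (1/t) * (Real.log 2 + Real.log t + Real.log ((M:ℝ)/b)) :=
              mul_le_mul_of_nonneg_left hlogle ht1
          _ = (1/t) * (Real.log 2 + Real.log t) + (1/t) * Real.log ((M:ℝ)/b) := by ring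
    -- limsup calculus
    set gE : ℝ → EReal := fun t =>
      (((1 / t) * Real.log ((sepMax φ t δf K₀ : ℝ) / betaInf φ t δf K₀)) : EReal) with hgE
    set aE : ℝ → EReal := fun t =>
      (((1/t) * (Real.log 2 + Real.log t) : ℝ) : EReal) with haE
    have hev : ∀ᶠ t in Filter.atTop,
        (fun t : ℝ => (((1 / t) * Real.log (periodicOrbitCount φ t : ℝ)) : EReal)) t ≤
        (aE + gE) t := by
      filter_upwards [Filter.eventually_ge_atTop (1:ℝ)] with t ht
      have hb := hbound t ht
      show (((1 / t) * Real.log ((periodicOrbitCount φ t : ℕ) : ℝ)) : EReal) ≤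
        ((((1/t) * (Real.log 2 + Real.log t) : ℝ)) : EReal) +
        ((((1 / t) * Real.log ((sepMax φ t δf K₀ : ℝ) / betaInf φ t δf K₀)) : ℝ) : EReal)
      rw [← EReal.coe_add]
      exact EReal.coe_le_coe_iff.mpr hb
    have hlimA : Filter.limsup aE Filter.atTop = ((0:ℝ):EReal) := by
      have h1 : Filter.Tendsto (fun t : ℝ => (1/t) * (Real.log 2 + Real.log t))
          Filter.atTop (nhds 0) := by
        have h2 : Filter.Tendsto (fun t : ℝ => Real.log 2 * t⁻¹) Filter.atTop (nhds 0) := by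
          have h3 := tendsto_inv_atTop_zero (𝕜 := ℝ)
          have h4 := h3.const_mul (Real.log 2)
          simpa using h4
        have h5 : Filter.Tendsto (fun t : ℝ => Real.log t / t) Filter.atTop (nhds 0) := by
          have := Real.isLittleO_log_id_atTop.tendsto_div_nhds_zero
          simpa using this
        have h6 := h2.add h5
        rw [add_zero] at h6
        have h7 : (fun t : ℝ => (1/t) * (Real.log 2 + Real.log t)) =
            fun t : ℝ => Real.log 2 * t⁻¹ + Real.log t / t := by
          funext t
          ring
        rw [h7]
        exact h6
      have h8 : Filter.Tendsto aE Filter.atTop (nhds ((0:ℝ):EReal)) := by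
        rw [haE]
        exact EReal.tendsto_coe.mpr h1
      exact h8.limsup_eq
    have hstep : Filter.limsup
        (fun t : ℝ => (((1 / t) * Real.log (periodicOrbitCount φ t : ℝ)) : EReal))
        Filter.atTop ≤ Filter.limsup (aE + gE) Filter.atTop :=
      Filter.limsup_le_limsup hev
    have hstep2 : Filter.limsup (aE + gE) Filter.atTop ≤
        Filter.limsup aE Filter.atTop + Filter.limsup gE Filter.atTop := by
      apply EReal.limsup_add_le
      · left; rw [hlimA]; simp
      · left; rw [hlimA]; simp
    have hstep3 : Filter.limsup aE Filter.atTop + Filter.limsup gE Filter.atTop =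
        Filter.limsup gE Filter.atTop := by
      rw [hlimA]
      rw [EReal.coe_zero, zero_add]
    have hstep4 : Filter.limsup gE Filter.atTop ≤ eStar φ := by
      rw [hgE]
      exact le_eStar φ K₀ hK₀cpt δf hδfc hδfpos
    exact hstep.trans (hstep2.trans (hstep3.le.trans hstep4))
  · -- K₀ empty : every point is fixed, so there are no periodic orbits
    have hKempty : K₀ = ∅ := Set.not_nonempty_iff_eq_empty.mp hK₀ne
    have hfix : ∀ x : X, ∀ r : ℝ, φ r x = x := by
      intro x
      by_contra h
      obtain ⟨s, hs⟩ := hiso' x h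
      rw [hKempty] at hs
      exact Set.notMem_empty _ hs
    have hN : ∀ t : ℝ, periodicOrbitCount φ t = 0 := by
      intro t
      rw [periodicOrbitCount]
      have hemp : IsEmpty {O : Set X // ∃ (x : X) (T : ℝ), 0 < T ∧ T ≤ t ∧ φ T x = x ∧
          (∀ s : ℝ, 0 < s → s < T → φ s x ≠ x) ∧ O = Set.range (fun s : ℝ => φ s x)} := by
        constructor
        rintro ⟨O, x, T, hT0, -, -, hmin, -⟩
        exact hmin (T/2) (by linarith) (by linarith) (hfix x (T/2))
      exact Nat.card_of_isEmpty
    have heq : (fun t : ℝ => (((1 / t) * Real.log (periodicOrbitCount φ t : ℝ)) : EReal)) =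
        fun _ => ((0:ℝ):EReal) := by
      funext t
      rw [hN t]
      norm_num
    rw [heq, Filter.limsup_const]
    exact eStar_nonneg φ
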